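/- Let U be a finite set, O a collection of at most k finite subsets of U, S another collection of subsets of U with union C. If z is a real with z ≤ (1+ε)·|⋃_{T∈O} T| and every T ∈ O \ S satisfies |T \ C| ≤ z/(2k), where 0 ≤ ε, then |C| ≥ ((1−ε)/2)·|⋃_{T∈O} T|. -/

import Mathlib

theorem stmt_6 {U : Type*} [DecidableEq U] (O S : Finset (Finset U))
    (k : ℕ) (hk : 0 < k) (hO : O.card ≤ k) (z ε : ℝ) (hε : 0 ≤ ε)
    (hz : z ≤ (1 + ε) * ((O.sup id).card : ℝ))
    (hthresh : ∀ T ∈ O \ S, ((T \ S.sup id).card : ℝ) ≤ z / (2 * k)) :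
    ((S.sup id).card : ℝ) ≥ (1 - ε) / 2 * ((O.sup id).card : ℝ) := by
  set C := S.sup id with hC
  have hsub : O.sup id ⊆ C ∪ ((O \ S).biUnion (fun T => T \ C)) := by
    intro x hx
    rw [Finset.sup_eq_biUnion, Finset.mem_biUnion] at hx
    obtain ⟨T, hT, hxT⟩ := hx
    by_cases hxC : x ∈ C
    · exact Finset.mem_union_left _ hxC
    · refine Finset.mem_union_right _ ?_
      rw [Finset.mem_biUnion]
      refine ⟨T, Finset.mem_sdiff.2 ⟨hT, fun hTS => hxC ?_⟩, Finset.mem_sdiff.2 ⟨hxT, hxC⟩⟩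
      exact Finset.mem_of_subset (Finset.le_sup (f := id) hTS) hxT
  have hcardN : (O.sup id).card ≤ C.card + ∑ T ∈ O \ S, (T \ C).card := by
    calc (O.sup id).card ≤ (C ∪ ((O \ S).biUnion (fun T => T \ C))).card :=
          Finset.card_le_card hsub
      _ ≤ C.card + ((O \ S).biUnion (fun T => T \ C)).card := Finset.card_union_le _ _
      _ ≤ C.card + ∑ T ∈ O \ S, (T \ C).card :=
          Nat.add_le_add_left (Finset.card_biUnion_le) _
  have hcard : ((O.sup id).card : ℝ) ≤ (C.card : ℝ) + ∑ T ∈ O \ S, ((T \ C).card : ℝ) := by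
    exact_mod_cast hcardN
  have hN0 : (0:ℝ) ≤ ((O.sup id).card : ℝ) := Nat.cast_nonneg _
  have hsum : ∑ T ∈ O \ S, ((T \ C).card : ℝ) ≤ (1 + ε) * ((O.sup id).card : ℝ) / 2 := by
    rcases le_or_gt 0 z with hz0 | hz0
    · have h1 : ∑ T ∈ O \ S, ((T \ C).card : ℝ) ≤ (O \ S).card • (z / (2 * k)) :=
        Finset.sum_le_card_nsmul _ _ _ hthresh
      have hm : ((O \ S).card : ℝ) ≤ (k : ℝ) := by
        exact_mod_cast le_trans (Finset.card_le_card (Finset.sdiff_subset)) hO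
      have hk' : (0:ℝ) < (k : ℝ) := by exact_mod_cast hk
      rw [nsmul_eq_mul] at h1
      have h2 : ((O \ S).card : ℝ) * (z / (2 * k)) ≤ (k : ℝ) * (z / (2 * k)) := by
        apply mul_le_mul_of_nonneg_right hm
        positivity
      have h3 : (k : ℝ) * (z / (2 * k)) = z / 2 := by
        field_simp
      have h4 : z / 2 ≤ (1 + ε) * ((O.sup id).card : ℝ) / 2 := by linarith
      linarith
    · have hempty : O \ S = ∅ := by
        by_contra h
        obtain ⟨T, hT⟩ := Finset.nonempty_of_ne_empty h
        have := hthresh T hT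
        have hk' : (0:ℝ) < 2 * (k : ℝ) := by positivity
        have : z / (2 * k) < 0 := div_neg_of_neg_of_pos hz0 hk'
        have h0 : (0:ℝ) ≤ ((T \ C).card : ℝ) := Nat.cast_nonneg _
        linarith [hthresh T hT]
      rw [hempty, Finset.sum_empty]
      positivity
  nlinarith
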